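/- Fix a nonnegative row vector w ∈ ℝⁿ₊ and a real matrix M ∈ ℝ^{m×n} with decomposition M = P - N, P, N ≥ 0. For v ∈ ℝᵐ with v > 0 entrywise, define the multiplicative update v' with entries v'_i = v_i · (P wᵀ)_i / ((v wwᵀ)_i + (N wᵀ)_i) (assuming denominators positive). Then ||M - v' w||_F ≤ ||M - v w||_F. -/

import Mathlib

/-- The generalized multiplicative update for a splitting M = P - N,
P, N ≥ 0, does not increase the Frobenius error ‖M - vw‖_F. -/
theorem stmt_6 (m n : ℕ) (M P N : Fin m → Fin n → ℝ)
    (w : Fin n → ℝ) (hw : ∀ j, 0 ≤ w j)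
    (hP : ∀ i j, 0 ≤ P i j) (hN : ∀ i j, 0 ≤ N i j)
    (hM : ∀ i j, M i j = P i j - N i j)
    (v : Fin m → ℝ) (hv : ∀ i, 0 < v i)
    (hden : ∀ i, 0 < v i * (∑ j, (w j) ^ 2) + ∑ j, N i j * w j)
    (v' : Fin m → ℝ)
    (hv' : ∀ i, v' i = v i * (∑ j, P i j * w j)
        / (v i * (∑ j, (w j) ^ 2) + ∑ j, N i j * w j)) :
    ∑ i, ∑ j, (M i j - v' i * w j) ^ 2 ≤ ∑ i, ∑ j, (M i j - v i * w j) ^ 2 := by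
  apply Finset.sum_le_sum
  intro i _
  set S := ∑ j, (w j) ^ 2 with hSdef
  set b := ∑ j, M i j * w j with hbdef
  set B := ∑ j, N i j * w j with hBdef
  have hA : (∑ j, P i j * w j) = b + B := by
    rw [hbdef, hBdef, ← Finset.sum_add_distrib]
    apply Finset.sum_congr rfl
    intro j _
    rw [hM]; ring
  have hS : 0 ≤ S := Finset.sum_nonneg fun j _ => sq_nonneg _
  have hB : 0 ≤ B := Finset.sum_nonneg fun j _ => mul_nonneg (hN i j) (hw j)
  have hD : 0 < v i * S + B := hden i
  have hvi : 0 < v i := hv i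
  have hv'i : v' i = v i * (b + B) / (v i * S + B) := by rw [hv' i, hA]
  have expand : ∀ u : ℝ, ∑ j, (M i j - u * w j) ^ 2
      = (∑ j, (M i j) ^ 2) - 2 * u * b + u ^ 2 * S := by
    intro u
    have h : ∀ j ∈ Finset.univ, (M i j - u * w j) ^ 2
        = ((M i j) ^ 2 - 2 * u * (M i j * w j)) + u ^ 2 * (w j) ^ 2 := by
      intro j _; ring
    rw [Finset.sum_congr rfl h, Finset.sum_add_distrib, Finset.sum_sub_distrib,
      ← Finset.mul_sum, ← Finset.mul_sum]
  rw [expand (v' i), expand (v i)]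
  have hD' : (v i * S + B) ≠ 0 := ne_of_gt hD
  have key : (S * (v i) ^ 2 - 2 * b * (v i)) - (S * (v' i) ^ 2 - 2 * b * (v' i))
      = v i * (b - v i * S) ^ 2 * (v i * S + 2 * B) / (v i * S + B) ^ 2 := by
    rw [hv'i]; have hD'' : S * v i + B ≠ 0 := by rwa [mul_comm]
    field_simp; ring
  have h1 : 0 < v i * S + 2 * B := by linarith
  have h2 : 0 ≤ v i * (b - v i * S) ^ 2 * (v i * S + 2 * B) / (v i * S + B) ^ 2 :=
    div_nonneg (mul_nonneg (mul_nonneg hvi.le (sq_nonneg _)) h1.le) (sq_nonneg _)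
  nlinarith [key, h2]
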